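/- With the notation of the context, assume there is k₁ ≥ 1 such that 1/2 ≤ Σ_{j=1}^{M_k} b_j^{(k)} ≤ 2 for all k ≥ k₁. Then for every C > 0 there exist constants A > 0 and k₀ ≥ k₁ such that for all k ≥ k₀ and all s ∈ ℝ with |s| ≤ C·k^{-1}, the derivative of g_k satisfies g_k'(s) = e^{-2k}·Σ_{j=1}^N a_j·μ_j·e^{μ_j s} + Σ_{j=1}^{M_k} b_j^{(k)}·ν_j^{(k)}·e^{ν_j^{(k)} s} ≥ k/A. -/

import Mathlib

/-- With `g_k(s) = e^{-2k} Σ_j a_j e^{μ_j s} + Σ_j b_j^{(k)} e^{ν_j^{(k)} s}`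
as in the context, if `1/2 ≤ Σ_j b_j^{(k)} ≤ 2` for all `k ≥ k₁`, then for every `C > 0`
there are `A > 0` and `k₀ ≥ k₁` such that for all `k ≥ k₀` and `|s| ≤ C/k` the derivative
of `g_k` equals `e^{-2k} Σ_j a_j μ_j e^{μ_j s} + Σ_j b_j^{(k)} ν_j^{(k)} e^{ν_j^{(k)} s}`
and is at least `k/A`. -/
theorem stmt11 (δ₁ δ₂ : ℝ) (hδ₁ : 0 < δ₁) (hδ : δ₁ < δ₂) (hδ₂ : δ₂ < 1)
    (N : ℕ) (a : Fin N → ℝ) (ha : ∀ j, 0 ≤ a j)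
    (μ : Fin N → ℝ) (hμ : ∀ j, 0 < μ j)
    (M : ℝ → ℕ)
    (b : (k : ℝ) → Fin (M k) → ℝ) (hb : ∀ k : ℝ, 1 ≤ k → ∀ j, 0 ≤ b k j)
    (ν : (k : ℝ) → Fin (M k) → ℝ)
    (hν : ∀ k : ℝ, 1 ≤ k → ∀ j, ν k j ∈ Set.Icc (2 * δ₁ * k) (2 * δ₂ * k))
    (g : (k : ℝ) → ℝ → ℝ)
    (hg : ∀ k s, g k s = Real.exp (-2 * k) * ∑ j, a j * Real.exp (μ j * s)
        + ∑ j, b k j * Real.exp (ν k j * s))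
    (k₁ : ℝ) (hk₁ : 1 ≤ k₁)
    (hsumb : ∀ k ≥ k₁, 1 / 2 ≤ ∑ j, b k j ∧ ∑ j, b k j ≤ 2) :
    ∀ C > (0:ℝ), ∃ A > (0:ℝ), ∃ k₀ ≥ k₁, ∀ k ≥ k₀, ∀ s : ℝ, |s| ≤ C / k →
      deriv (g k) s = Real.exp (-2 * k) * ∑ j, a j * μ j * Real.exp (μ j * s)
          + ∑ j, b k j * ν k j * Real.exp (ν k j * s) ∧
      k / A ≤ Real.exp (-2 * k) * ∑ j, a j * μ j * Real.exp (μ j * s)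
          + ∑ j, b k j * ν k j * Real.exp (ν k j * s) := by

  intro C hC
  refine ⟨Real.exp (2 * δ₂ * C) / δ₁, by positivity, k₁, le_refl _, ?_⟩
  intro k hk s hs
  have hk1 : (1:ℝ) ≤ k := le_trans hk₁ hk
  have hkpos : (0:ℝ) < k := lt_of_lt_of_le one_pos hk1
  have hgk : g k = fun t => Real.exp (-2 * k) * ∑ j, a j * Real.exp (μ j * t)
        + ∑ j, b k j * Real.exp (ν k j * t) := funext (hg k)
  have hterm : ∀ (c d : ℝ), HasDerivAt (fun t => d * Real.exp (c * t))
      (d * c * Real.exp (c * s)) s := by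
    intro c d
    have : HasDerivAt (fun y => d * Real.exp (c * y)) (d * (Real.exp (c * s) * (c * 1))) s := ((hasDerivAt_id s).const_mul c).exp.const_mul d
    convert this using 1
    simp only [id_eq, mul_one]
    ring
  have hd : HasDerivAt (g k) (Real.exp (-2 * k) * ∑ j, a j * μ j * Real.exp (μ j * s)
          + ∑ j, b k j * ν k j * Real.exp (ν k j * s)) s := by
    rw [hgk]
    have h1 : HasDerivAt (fun t => ∑ j, a j * Real.exp (μ j * t))
        (∑ j, a j * μ j * Real.exp (μ j * s)) s :=
      HasDerivAt.fun_sum fun j _ => hterm (μ j) (a j)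
    have h2 : HasDerivAt (fun t => ∑ j, b k j * Real.exp (ν k j * t))
        (∑ j, b k j * ν k j * Real.exp (ν k j * s)) s :=
      HasDerivAt.fun_sum fun j _ => hterm (ν k j) (b k j)
    exact (h1.const_mul (Real.exp (-2 * k))).add h2
  refine ⟨hd.deriv, ?_⟩
  have hb' := hb k hk1
  have hν' := hν k hk1
  have h0 : 0 ≤ Real.exp (-2 * k) * ∑ j, a j * μ j * Real.exp (μ j * s) := by
    apply mul_nonneg (Real.exp_nonneg _)
    exact Finset.sum_nonneg fun j _ => mul_nonneg (mul_nonneg (ha j) (hμ j).le) (Real.exp_nonneg _)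
  have hE : ∀ j, Real.exp (-(2 * δ₂ * C)) ≤ Real.exp (ν k j * s) := by
    intro j
    apply Real.exp_le_exp.2
    have h1 : |ν k j * s| ≤ 2 * δ₂ * C := by
      rw [abs_mul]
      have hν0 : 0 ≤ ν k j := le_trans (mul_pos (by positivity) hkpos).le (hν' j).1
      rw [abs_of_nonneg hν0]
      calc ν k j * |s| ≤ (2 * δ₂ * k) * (C / k) := by
              exact mul_le_mul (hν' j).2 hs (abs_nonneg _) (mul_pos (mul_pos two_pos (hδ₁.trans hδ)) hkpos).le
        _ = 2 * δ₂ * C := by field_simp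
    linarith [neg_abs_le (ν k j * s)]
  have key : δ₁ * k * Real.exp (-(2 * δ₂ * C))
      ≤ ∑ j, b k j * ν k j * Real.exp (ν k j * s) := by
    have h1 : ∀ j, b k j * (2 * δ₁ * k) * Real.exp (-(2 * δ₂ * C))
        ≤ b k j * ν k j * Real.exp (ν k j * s) := by
      intro j
      have hbj := hb' j
      have hνj := (hν' j).1
      have hν0 : 0 ≤ ν k j := le_trans (mul_pos (by positivity) hkpos).le hνj
      exact mul_le_mul (mul_le_mul_of_nonneg_left hνj hbj) (hE j) (Real.exp_nonneg _)
        (mul_nonneg hbj hν0)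
    calc δ₁ * k * Real.exp (-(2 * δ₂ * C))
        = (1/2 : ℝ) * (2 * δ₁ * k) * Real.exp (-(2 * δ₂ * C)) := by ring
      _ ≤ (∑ j, b k j) * (2 * δ₁ * k) * Real.exp (-(2 * δ₂ * C)) := by
          have := (hsumb k hk).1
          have h2k : (0:ℝ) ≤ 2 * δ₁ * k := by positivity
          apply mul_le_mul_of_nonneg_right _ (Real.exp_nonneg _)
          exact mul_le_mul_of_nonneg_right this h2k
      _ = ∑ j, b k j * (2 * δ₁ * k) * Real.exp (-(2 * δ₂ * C)) := by
          rw [Finset.sum_mul, Finset.sum_mul]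
      _ ≤ ∑ j, b k j * ν k j * Real.exp (ν k j * s) :=
          Finset.sum_le_sum fun j _ => h1 j
  have hA : k / (Real.exp (2 * δ₂ * C) / δ₁) = δ₁ * k * Real.exp (-(2 * δ₂ * C)) := by
    rw [Real.exp_neg]
    field_simp
  rw [hA]
  linarith
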